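/- For all n ≥ 1, the pair (x, y) = (3B_n, 3C_n) satisfies 8x² − y² = −9, where B_n are balancing numbers and C_n = √(8B_n²+1) are Lucas-balancing numbers. Conversely, every positive integer solution of 8x² − y² = −9 is of this form. -/

import Mathlib

def B : ℕ → ℤ
  | 0 => 0
  | 1 => 1
  | (n+2) => 6 * B (n+1) - B n

def C : ℕ → ℤ
  | 0 => 1
  | 1 => 3
  | (n+2) => 6 * C (n+1) - C n

def b : ℕ → ℤ
  | 0 => 0
  | 1 => 0
  | (n+2) => 6 * b (n+1) - b n + 2

def c : ℕ → ℤ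
  | 0 => -1
  | 1 => 1
  | (n+2) => 6 * c (n+1) - c n

def P : ℕ → ℤ
  | 0 => 0
  | 1 => 1
  | (n+2) => 2 * P (n+1) + P n

lemma keyBC : ∀ n : ℕ, B (n+1) = 3 * B n + C n ∧ C (n+1) = 8 * B n + 3 * C n
  | 0 => by simp [B, C]
  | 1 => by norm_num [B, C]
  | (n+2) => by
    have h1 := keyBC n
    have h2 := keyBC (n+1)
    constructor
    · show B (n+3) = 3 * B (n+2) + C (n+2)
      rw [show B (n+3) = 6 * B (n+2) - B (n+1) from rfl,
          show B (n+2) = 6 * B (n+1) - B n from rfl,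
          show C (n+2) = 6 * C (n+1) - C n from rfl]
      omega
    · show C (n+3) = 8 * B (n+2) + 3 * C (n+2)
      rw [show C (n+3) = 6 * C (n+2) - C (n+1) from rfl,
          show B (n+2) = 6 * B (n+1) - B n from rfl,
          show C (n+2) = 6 * C (n+1) - C n from rfl]
      omega

lemma sqBC : ∀ n : ℕ, 8 * B n ^ 2 - C n ^ 2 = -1 := by
  intro n
  induction n with
  | zero => simp [B, C]
  | succ n ih =>
    obtain ⟨h1, h2⟩ := keyBC n
    rw [h1, h2]
    linear_combination ih

lemma descent : ∀ k : ℕ, ∀ u v : ℤ, u.toNat = k → 0 < u → 0 < v → v ^ 2 = 8 * u ^ 2 + 1 →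
    ∃ n : ℕ, 1 ≤ n ∧ u = B n ∧ v = C n := by
  intro k
  induction k using Nat.strong_induction_on with
  | _ k ih =>
    intro u v hk hu hv he
    by_cases h1 : u = 1
    · subst h1
      have hv3 : v = 3 := by nlinarith [sq_nonneg (v - 3), sq_nonneg (v + 3)]
      exact ⟨1, le_refl 1, by simp [B], by simp [C, hv3]⟩
    · have hu2 : 2 ≤ u := by omega
      have hvlt : v < 3 * u := by nlinarith
      have hv8 : 8 * u < 3 * v := by nlinarith
      have hv2 : 2 * u < v := by nlinarith
      have he' : (3 * v - 8 * u) ^ 2 = 8 * (3 * u - v) ^ 2 + 1 := by linear_combination he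
      obtain ⟨n, hn1, hn2, hn3⟩ := ih (3 * u - v).toNat (by omega) (3 * u - v) (3 * v - 8 * u)
        rfl (by omega) (by omega) he'
      obtain ⟨k1, k2⟩ := keyBC n
      exact ⟨n + 1, by omega, by rw [k1, ← hn2, ← hn3]; ring, by rw [k2, ← hn2, ← hn3]; ring⟩

theorem pell_neg_nine_solutions :
    (∀ n : ℕ, 1 ≤ n → 8 * (3 * B n) ^ 2 - (3 * C n) ^ 2 = -9) ∧
    (∀ x y : ℤ, 0 < x → 0 < y → 8 * x ^ 2 - y ^ 2 = -9 →
      ∃ n : ℕ, 1 ≤ n ∧ x = 3 * B n ∧ y = 3 * C n) := by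
  constructor
  · intro n _
    linear_combination 9 * sqBC n
  · intro x y hx hy he
    have hzx : ((x : ZMod 3) = 0) := by
      have h2 : (8 * (x : ZMod 3) ^ 2 - (y : ZMod 3) ^ 2 = -9) := by
        have := congrArg (fun t : ℤ => (t : ZMod 3)) he
        push_cast at this
        exact this
      revert h2
      have : ∀ a bb : ZMod 3, 8 * a ^ 2 - bb ^ 2 = -9 → a = 0 := by decide
      exact this _ _
    have hzy : ((y : ZMod 3) = 0) := by
      have h2 : (8 * (x : ZMod 3) ^ 2 - (y : ZMod 3) ^ 2 = -9) := by
        have := congrArg (fun t : ℤ => (t : ZMod 3)) he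
        push_cast at this
        exact this
      revert h2
      have : ∀ a bb : ZMod 3, 8 * a ^ 2 - bb ^ 2 = -9 → bb = 0 := by decide
      exact this _ _
    obtain ⟨u, hu⟩ := (ZMod.intCast_zmod_eq_zero_iff_dvd x 3).mp hzx
    obtain ⟨v, hv⟩ := (ZMod.intCast_zmod_eq_zero_iff_dvd y 3).mp hzy
    subst hu; subst hv
    have hu' : 0 < u := by omega
    have hv' : 0 < v := by omega
    have he2 : v ^ 2 = 8 * u ^ 2 + 1 := by push_cast at he; nlinarith [he]
    obtain ⟨n, hn1, hn2, hn3⟩ := descent u.toNat u v rfl hu' hv' he2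
    exact ⟨n, hn1, by omega, by omega⟩
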